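/- If two vertices v and v' of possibly different graphs have isomorphic rooted computational trees of depth K (i.e., there is an isomorphism of their depth-K unfolding trees preserving node features), then for every K-layer message-passing GNN, h_v^{(K)} = h_{v'}^{(K)}. -/

import Mathlib

/-- The type of depth-`K` computational (unfolding) trees with node features in `X`:
a depth-`0` tree is just a feature, a depth-`(K+1)` tree is a root feature together
with a multiset of depth-`K` subtrees. Equality of these canonical objects is exactly
feature-preserving isomorphism of rooted unfolding trees. -/
def CompTree (X : Type*) : ℕ → Type _
  | 0 => X
  | K + 1 => X × Multiset (CompTree X K)

/-- The depth-`K` computational tree of a vertex `v`: its root carries `x v` and its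
children are the depth-`(K-1)` trees of the neighbors of `v` (with multiplicity). -/
def unfoldTree {V X : Type*} [Fintype V] (G : SimpleGraph V) [DecidableRel G.Adj]
    (x : V → X) : (K : ℕ) → V → CompTree X K
  | 0, v => x v
  | K + 1, v => (x v, ((G.neighborFinset v).val.map (unfoldTree G x K)))

/-- Truncate a depth-`(K+1)` tree to depth `K`. -/
def CompTree.trunc {X : Type*} : (K : ℕ) → CompTree X (K + 1) → CompTree X K
  | 0, t => t.1
  | K + 1, t => (t.1, t.2.map (CompTree.trunc K))

lemma trunc_unfold {V X : Type*} [Fintype V] (G : SimpleGraph V) [DecidableRel G.Adj]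
    (x : V → X) : ∀ (K : ℕ) (v : V),
    CompTree.trunc K (unfoldTree G x (K + 1) v) = unfoldTree G x K v := by
  intro K
  induction K with
  | zero => intro v; rfl
  | succ K ih =>
    intro v
    simp only [unfoldTree, CompTree.trunc, Multiset.map_map, Function.comp]
    congr 1
    refine (Multiset.map_map _ _ _).trans ?_
    exact Multiset.map_congr rfl (fun w _ => ih w)

/-- If two vertices (of possibly different graphs) have isomorphic depth-`K`
computational trees, then every `K`-layer message-passing GNN gives them the same
representation. -/
theorem stmt_9 {V₁ V₂ X Z : Type*} [Fintype V₁] [Fintype V₂]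
    (G₁ : SimpleGraph V₁) [DecidableRel G₁.Adj]
    (G₂ : SimpleGraph V₂) [DecidableRel G₂.Adj]
    (x₁ : V₁ → X) (x₂ : V₂ → X)
    (AGG : Multiset X → Z) (COMB : X → Z → X)
    (h₁ : ℕ → V₁ → X) (h₂ : ℕ → V₂ → X)
    (h₁0 : ∀ v, h₁ 0 v = x₁ v)
    (h₁rec : ∀ K v, h₁ (K + 1) v =
      COMB (h₁ K v) (AGG ((G₁.neighborFinset v).val.map (h₁ K))))
    (h₂0 : ∀ v, h₂ 0 v = x₂ v)
    (h₂rec : ∀ K v, h₂ (K + 1) v =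
      COMB (h₂ K v) (AGG ((G₂.neighborFinset v).val.map (h₂ K))))
    (K : ℕ) (v₁ : V₁) (v₂ : V₂)
    (htree : unfoldTree G₁ x₁ K v₁ = unfoldTree G₂ x₂ K v₂) :
    h₁ K v₁ = h₂ K v₂ := by
  induction K generalizing v₁ v₂ with
  | zero => rw [h₁0, h₂0]; exact htree
  | succ K ih =>
    have hx : x₁ v₁ = x₂ v₂ :=
      congrArg (Prod.fst (α := X) (β := Multiset (CompTree X K))) htree
    have hm : ((G₁.neighborFinset v₁).val.map (unfoldTree G₁ x₁ K)) =
        ((G₂.neighborFinset v₂).val.map (unfoldTree G₂ x₂ K)) :=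
      congrArg (Prod.snd (α := X) (β := Multiset (CompTree X K))) htree
    rw [h₁rec, h₂rec]
    have hv : h₁ K v₁ = h₂ K v₂ := by
      apply ih
      have := congrArg (CompTree.trunc K) (congrArg (Prod.mk (x₁ v₁)) hm)
      calc unfoldTree G₁ x₁ K v₁ = CompTree.trunc K (unfoldTree G₁ x₁ (K+1) v₁) :=
            (trunc_unfold G₁ x₁ K v₁).symm
        _ = CompTree.trunc K (unfoldTree G₂ x₂ (K+1) v₂) := by
            show CompTree.trunc K (x₁ v₁, _) = CompTree.trunc K (x₂ v₂, _)
            rw [hx, hm]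
        _ = unfoldTree G₂ x₂ K v₂ := trunc_unfold G₂ x₂ K v₂
    rw [hv]
    congr 1
    have hrel : Multiset.Rel (fun a b => unfoldTree G₁ x₁ K a = unfoldTree G₂ x₂ K b)
        (G₁.neighborFinset v₁).val (G₂.neighborFinset v₂).val := by
      rw [← Multiset.rel_map]
      rw [Multiset.rel_eq]
      exact hm
    have hrel' : Multiset.Rel (fun a b => h₁ K a = h₂ K b)
        (G₁.neighborFinset v₁).val (G₂.neighborFinset v₂).val :=
      hrel.mono (fun a _ b _ hab => ih a b hab)
    congr 1
    rw [← Multiset.rel_eq, Multiset.rel_map]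
    exact hrel'
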